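/- Let 𝒮 = {a ∈ ℓ^∞(ℕ; ℝ) : aₙ ≥ 0 for all n} and let c₀ denote the space of real sequences converging to 0. Define A(a) = {b ∈ c₀ : 0 ≤ bₙ ≤ aₙ for all n} for a ∈ 𝒮. Then: (i) A is a linear set-valued map: each A(a) is a nonempty bounded convex subset of c₀ that is closed in c₀, A(a) + A(a′) = A(a + a′) (Minkowski sum) and A(λ • a) = λ • A(a) for all a, a′ ∈ 𝒮 and λ > 0; (ii) for every x ∈ c₀ with xₙ > 0 for all n, there exists no map a : 𝒮 → c₀ with a(z) ∈ A(z) for all z ∈ 𝒮, a(z + z′) = a(z) + a(z′), a(λ • z) = λ • a(z) for λ > 0, and a(x) = x. -/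

import Mathlib

open Filter Topology
open scoped Pointwise

/-- The cone of nonnegative bounded sequences. -/
def stmt15Cone : Set (ℕ → ℝ) := {a | (∀ n, 0 ≤ a n) ∧ ∃ M, ∀ n, a n ≤ M}

/-- The order interval `{b ∈ c₀ : 0 ≤ b ≤ a}` inside `c₀`. -/
def stmt15Map (a : ℕ → ℝ) : Set (ℕ → ℝ) :=
  {b | Tendsto b atTop (𝓝 0) ∧ ∀ n, 0 ≤ b n ∧ b n ≤ a n}

/-- Sharpness of the compact type condition: `A a = {b ∈ c₀ : 0 ≤ b ≤ a}`
defines a linear set-valued map on the cone of nonnegative bounded sequences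
with nonempty bounded convex values closed in `c₀`, yet for every everywhere
positive `x ∈ c₀` there is no linear selection `a` of `A` with `a x = x`. -/
theorem stmt15 :
    (∀ a ∈ stmt15Cone, ∀ a' ∈ stmt15Cone,
      (stmt15Map a).Nonempty ∧
      (∃ M, ∀ b ∈ stmt15Map a, ∀ n, |b n| ≤ M) ∧
      Convex ℝ (stmt15Map a) ∧
      (∀ b : ℕ → ℝ, Tendsto b atTop (𝓝 0) →
        (∀ ε : ℝ, 0 < ε → ∃ b' ∈ stmt15Map a, ∀ n, |b n - b' n| ≤ ε) →
        b ∈ stmt15Map a) ∧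
      stmt15Map a + stmt15Map a' = stmt15Map (a + a') ∧
      (∀ l : ℝ, 0 < l → stmt15Map (l • a) = l • stmt15Map a)) ∧
    (∀ x : ℕ → ℝ, Tendsto x atTop (𝓝 0) → (∀ n, 0 < x n) →
      ¬ ∃ sel : (ℕ → ℝ) → ℕ → ℝ,
        (∀ z ∈ stmt15Cone, sel z ∈ stmt15Map z) ∧
        (∀ z ∈ stmt15Cone, ∀ z' ∈ stmt15Cone, sel (z + z') = sel z + sel z') ∧
        (∀ l : ℝ, 0 < l → ∀ z ∈ stmt15Cone, sel (l • z) = l • sel z) ∧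
        sel x = x) := by
  constructor
  · rintro a ⟨ha0, M, haM⟩ a' ⟨ha'0, M', ha'M⟩
    refine ⟨⟨0, tendsto_const_nhds, fun n => ⟨le_refl 0, ha0 n⟩⟩, ?_, ?_, ?_, ?_, ?_⟩
    · -- bounded
      refine ⟨M, fun b hb n => ?_⟩
      rw [abs_of_nonneg (hb.2 n).1]
      exact (hb.2 n).2.trans (haM n)
    · -- convex
      rintro b hb b' hb' θ τ hθ hτ hsum
      refine ⟨?_, fun n => ⟨?_, ?_⟩⟩
      · have := (hb.1.const_mul θ).add (hb'.1.const_mul τ)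
        simp only [mul_zero, add_zero] at this; exact this
      · have : 0 ≤ θ * b n + τ * b' n :=
          add_nonneg (mul_nonneg hθ (hb.2 n).1) (mul_nonneg hτ (hb'.2 n).1)
        simpa using this
      · have : θ * b n + τ * b' n ≤ θ * a n + τ * a n := by
          gcongr
          exacts [(hb.2 n).2, (hb'.2 n).2]
        calc (θ • b + τ • b') n = θ * b n + τ * b' n := by simp
          _ ≤ θ * a n + τ * a n := this
          _ = a n := by rw [← add_mul, hsum, one_mul]
    · -- closed
      intro b hb happ
      refine ⟨hb, fun n => ⟨?_, ?_⟩⟩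
      · have : ∀ ε > (0:ℝ), 0 ≤ b n + ε := by
          intro ε hε
          obtain ⟨b', hb', hd⟩ := happ ε hε
          have := abs_le.1 (hd n)
          linarith [(hb'.2 n).1]
        exact le_of_forall_pos_le_add this
      · refine le_of_forall_pos_le_add (fun ε hε => ?_)
        obtain ⟨b', hb', hd⟩ := happ ε hε
        have := abs_le.1 (hd n)
        linarith [(hb'.2 n).2]
    · -- Minkowski sum
      ext b
      constructor
      · rintro ⟨b₁, hb₁, b₂, hb₂, rfl⟩
        refine ⟨by have h0 := hb₁.1.add hb₂.1; simp only [add_zero] at h0; exact h0, fun n => ⟨?_, ?_⟩⟩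
        · exact add_nonneg (hb₁.2 n).1 (hb₂.2 n).1
        · exact add_le_add (hb₁.2 n).2 (hb₂.2 n).2
      · rintro ⟨hb0, hb⟩
        refine ⟨fun n => min (b n) (a n), ⟨?_, fun n => ⟨?_, min_le_right _ _⟩⟩,
          fun n => b n - min (b n) (a n), ⟨?_, fun n => ⟨?_, ?_⟩⟩, ?_⟩
        · exact squeeze_zero (fun n => le_min (hb n).1 (ha0 n)) (fun n => min_le_left _ _) hb0
        · exact le_min (hb n).1 (ha0 n)
        · refine squeeze_zero (fun n => ?_) (fun n => ?_) hb0
          · show 0 ≤ b n - min (b n) (a n)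
            linarith [min_le_left (b n) (a n)]
          · show b n - min (b n) (a n) ≤ b n
            linarith [le_min (hb n).1 (ha0 n)]
        · show 0 ≤ b n - min (b n) (a n)
          linarith [min_le_left (b n) (a n)]
        · show b n - min (b n) (a n) ≤ a' n
          rcases le_total (b n) (a n) with h | h
          · rw [min_eq_left h]; simpa using ha'0 n
          · rw [min_eq_right h]
            have := (hb n).2
            simp only [Pi.add_apply] at this
            linarith
        · funext n; simp
    · -- dilation
      intro l hl
      ext b
      rw [Set.mem_smul_set_iff_inv_smul_mem₀ (ne_of_gt hl)]
      constructor
      · rintro ⟨hb0, hb⟩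
        refine ⟨by have h0 := hb0.const_mul l⁻¹; simp only [mul_zero] at h0; exact h0, fun n => ⟨?_, ?_⟩⟩
        · simpa using mul_nonneg (le_of_lt (inv_pos.2 hl)) (hb n).1
        · have := (hb n).2
          simp only [Pi.smul_apply, smul_eq_mul] at this ⊢
          rw [inv_mul_le_iff₀ hl]
          linarith
      · rintro ⟨hb0, hb⟩
        refine ⟨?_, fun n => ⟨?_, ?_⟩⟩
        · have h := hb0.const_mul l
          rw [mul_zero] at h
          refine h.congr fun k => ?_
          simp [Pi.smul_apply, smul_eq_mul, ← mul_assoc, mul_inv_cancel₀ (ne_of_gt hl)]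
        · have h0 := (hb n).1
          simp only [Pi.smul_apply, smul_eq_mul] at h0
          have h2 : l * (l⁻¹ * b n) = b n := by
            rw [← mul_assoc, mul_inv_cancel₀ (ne_of_gt hl), one_mul]
          nlinarith [mul_nonneg hl.le h0]
        · have h1 := (hb n).2
          simp only [Pi.smul_apply, smul_eq_mul] at h1 ⊢
          calc b n = l * (l⁻¹ * b n) := by
                rw [← mul_assoc, mul_inv_cancel₀ (ne_of_gt hl), one_mul]
            _ ≤ l * a n := mul_le_mul_of_nonneg_left h1 (le_of_lt hl)
  · -- no linear selection
    rintro x hx0 hxpos ⟨sel, hmem, hadd, hsmul, hfix⟩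
    -- x is in the cone
    obtain ⟨Mx, hMx⟩ := hx0.bddAbove_range
    have hxcone : x ∈ stmt15Cone :=
      ⟨fun n => (hxpos n).le, Mx, fun n => hMx ⟨n, rfl⟩⟩
    -- the constant-1 sequence
    have h1cone : (1 : ℕ → ℝ) ∈ stmt15Cone := ⟨fun n => zero_le_one, 1, fun n => le_refl 1⟩
    have hsel1 := hmem 1 h1cone
    obtain ⟨N, hN⟩ := eventually_atTop.1 (hsel1.1.eventually_lt_const (by norm_num : (0:ℝ) < 1/2))
    -- tail truncation of x
    set z : ℕ → ℝ := fun k => if N ≤ k then x k else 0 with hz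
    have hzcone : z ∈ stmt15Cone := by
      refine ⟨fun k => ?_, Mx, fun k => ?_⟩
      · by_cases h : N ≤ k <;> simp [hz, h, (hxpos k).le]
      · by_cases h : N ≤ k
        · simpa [hz, h] using hMx ⟨k, rfl⟩
        · have := hMx ⟨N, rfl⟩
          have := hxpos N
          simp only [hz, h, if_neg h]
          linarith
    have hzx : ∀ k, z k ≤ x k := by
      intro k; by_cases h : N ≤ k <;> simp [hz, h, (hxpos k).le]
    have hxzcone : x - z ∈ stmt15Cone := by
      refine ⟨fun k => by simpa using sub_nonneg.2 (hzx k), Mx, fun k => ?_⟩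
      have h1 : 0 ≤ z k := hzcone.1 k
      have := hMx ⟨k, rfl⟩
      simp only [Pi.sub_apply]
      linarith
    -- sel z = z pointwise
    have hselz : ∀ k, sel z k = z k := by
      intro k
      have heq : sel x = sel z + sel (x - z) := by
        have h := hadd z hzcone (x - z) hxzcone
        rwa [show z + (x - z) = x from by ring] at h
      have h1 : sel z k ≤ z k := ((hmem z hzcone).2 k).2
      have h2 : sel (x - z) k ≤ x k - z k := by
        simpa using ((hmem (x - z) hxzcone).2 k).2
      have h3 : x k = sel z k + sel (x - z) k := by
        have := congrFun heq k
        rw [hfix] at this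
        simpa using this
      linarith
    -- the sup of the tail of x
    set S : Set ℝ := x '' Set.Ici N with hS
    have hSne : S.Nonempty := ⟨x N, N, le_refl N, rfl⟩
    have hSbdd : BddAbove S := ⟨Mx, by rintro y ⟨k, _, rfl⟩; exact hMx ⟨k, rfl⟩⟩
    set c : ℝ := sSup S with hc
    have hcx : ∀ k, N ≤ k → x k ≤ c := fun k hk => le_csSup hSbdd ⟨k, hk, rfl⟩
    have hcpos : 0 < c := lt_of_lt_of_le (hxpos N) (hcx N (le_refl N))
    obtain ⟨y, ⟨n, hn, rfl⟩, hy⟩ := exists_lt_of_lt_csSup hSne (by linarith : c/2 < c)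
    -- z ≤ c • 1, so (1/c) • z ≤ 1
    have hzc : ∀ k, z k ≤ c := by
      intro k; by_cases h : N ≤ k
      · simpa [hz, h] using hcx k h
      · simp [hz, h, hcpos.le]
    have hinvcone : (c⁻¹ • z) ∈ stmt15Cone := by
      refine ⟨fun k => ?_, 1, fun k => ?_⟩
      · simpa using mul_nonneg (inv_pos.2 hcpos).le (hzcone.1 k)
      · simp only [Pi.smul_apply, smul_eq_mul]
        rw [inv_mul_le_iff₀ hcpos, mul_one]
        exact hzc k
    have hwcone : (1 - c⁻¹ • z) ∈ stmt15Cone := by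
      refine ⟨fun k => ?_, 1, fun k => ?_⟩
      · have : c⁻¹ * z k ≤ 1 := by
          rw [inv_mul_le_iff₀ hcpos, mul_one]; exact hzc k
        simpa using sub_nonneg.2 this
      · have : 0 ≤ c⁻¹ * z k := mul_nonneg (inv_pos.2 hcpos).le (hzcone.1 k)
        simp only [Pi.sub_apply, Pi.smul_apply, Pi.one_apply, smul_eq_mul]
        linarith
    -- sel 1 ≥ (1/c) • z pointwise
    have key : sel 1 n ≥ c⁻¹ * z n := by
      have heq : sel 1 = sel (c⁻¹ • z) + sel (1 - c⁻¹ • z) := by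
        have h := hadd _ hinvcone _ hwcone
        rwa [show c⁻¹ • z + (1 - c⁻¹ • z) = (1 : ℕ → ℝ) from by abel] at h
      have h1 : sel (c⁻¹ • z) = c⁻¹ • sel z := hsmul c⁻¹ (inv_pos.2 hcpos) z hzcone
      have h2 : 0 ≤ sel (1 - c⁻¹ • z) n := ((hmem _ hwcone).2 n).1
      have := congrFun heq n
      rw [h1] at this
      simp only [Pi.add_apply, Pi.smul_apply, smul_eq_mul, hselz n] at this
      linarith
    -- contradiction at n
    have hn' : N ≤ n := hn
    have hzn : z n = x n := by simp [hz, hn']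
    have hlarge : (1:ℝ)/2 < sel 1 n := by
      have h2 : c⁻¹ * (c/2) < c⁻¹ * x n := by
        exact mul_lt_mul_of_pos_left hy (inv_pos.2 hcpos)
      have h3 : c⁻¹ * (c/2) = 1/2 := by field_simp
      rw [h3] at h2
      rw [hzn] at key
      linarith
    exact absurd (hN n hn') (not_lt.2 hlarge.le)
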